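/- arXiv:2510.10894 — 3 statements merged into one kernel-verified Lean document; each statement's English description precedes it below -/
import Mathlib

section
/- Let A u = f with A symmetric positive definite, u_ms the Galerkin approximation through P, and D a symmetric positive definite matrix. Then ‖u - u_ms‖_A² ≤ ‖f‖_{D⁻¹} · ‖u - u_ms‖_D, where ‖v‖_M² = vᵀ M v. -/
open Matrix
open scoped MatrixOrder

lemma dotProduct_cauchy_schwarz' {n : ℕ} (a b : Fin n → ℝ) :
    a ⬝ᵥ b ≤ Real.sqrt (a ⬝ᵥ a) * Real.sqrt (b ⬝ᵥ b) := by
  have hnn : (0:ℝ) ≤ a ⬝ᵥ a := Finset.sum_nonneg fun i _ => mul_self_nonneg _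
  have h : (a ⬝ᵥ b) ^ 2 ≤ (a ⬝ᵥ a) * (b ⬝ᵥ b) := by
    simpa [dotProduct, sq] using
      Finset.sum_mul_sq_le_sq_mul_sq Finset.univ a b
  calc a ⬝ᵥ b ≤ |a ⬝ᵥ b| := le_abs_self _
    _ = Real.sqrt ((a ⬝ᵥ b) ^ 2) := (Real.sqrt_sq_eq_abs _).symm
    _ ≤ Real.sqrt ((a ⬝ᵥ a) * (b ⬝ᵥ b)) := Real.sqrt_le_sqrt h
    _ = Real.sqrt (a ⬝ᵥ a) * Real.sqrt (b ⬝ᵥ b) := Real.sqrt_mul hnn _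

lemma mulVec_dot {k l : ℕ} (M : Matrix (Fin k) (Fin l) ℝ) (v : Fin l → ℝ) (w : Fin k → ℝ) :
    (M.mulVec v) ⬝ᵥ w = v ⬝ᵥ (Mᵀ.mulVec w) := by
  rw [Matrix.dotProduct_mulVec, Matrix.vecMul_transpose]

lemma mulVec_inj_of_rank {n m : ℕ} (P : Matrix (Fin n) (Fin m) ℝ) (hP : P.rank = m) :
    Function.Injective P.mulVec := by
  have hker : LinearMap.ker P.mulVecLin = ⊥ := by
    have h := LinearMap.finrank_range_add_finrank_ker P.mulVecLin
    rw [Matrix.rank] at hP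
    rw [hP] at h
    simp only [Module.finrank_pi, Fintype.card_fin] at h
    have : Module.finrank ℝ (LinearMap.ker P.mulVecLin) = 0 := by omega
    exact Submodule.finrank_eq_zero.mp this
  have := LinearMap.ker_eq_bot.mp hker
  simpa [Function.Injective] using this

/-- `‖u - u_ms‖_A² ≤ ‖f‖_{D⁻¹} · ‖u - u_ms‖_D` for the Galerkin approximation. -/
theorem galerkin_error_dual_bound (n m : ℕ)
    (A D : Matrix (Fin n) (Fin n) ℝ) (P : Matrix (Fin n) (Fin m) ℝ)
    (hA : A.PosDef) (hD : D.PosDef) (hP : P.rank = m)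
    (f u : Fin n → ℝ) (hu : u = A⁻¹.mulVec f)
    (u_ms : Fin n → ℝ)
    (hms : u_ms = P.mulVec ((Pᵀ * A * P)⁻¹.mulVec (Pᵀ.mulVec f))) :
    (u - u_ms) ⬝ᵥ (A.mulVec (u - u_ms)) ≤
      Real.sqrt (f ⬝ᵥ (D⁻¹.mulVec f)) *
        Real.sqrt ((u - u_ms) ⬝ᵥ (D.mulVec (u - u_ms))) := by
  set e := u - u_ms with he
  have hAh : Aᵀ = A := by
    have := hA.isHermitian
    rwa [Matrix.IsHermitian, Matrix.conjTranspose_eq_transpose_of_trivial] at this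
  have hAinv : IsUnit A.det := hA.det_pos.ne'.isUnit
  have hAu : A.mulVec u = f := by
    rw [hu, Matrix.mulVec_mulVec, Matrix.mul_nonsing_inv _ hAinv, Matrix.one_mulVec]
  set B := Pᵀ * A * P with hB
  have hBquad : ∀ x : Fin m → ℝ, x ⬝ᵥ B.mulVec x = (P.mulVec x) ⬝ᵥ A.mulVec (P.mulVec x) := by
    intro x
    rw [hB, Matrix.mul_assoc, ← Matrix.mulVec_mulVec, ← mulVec_dot, ← Matrix.mulVec_mulVec]
  have hBpd : B.PosDef := by
    refine Matrix.PosDef.of_dotProduct_mulVec_pos ?_ ?_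
    · have : Bᵀ = B := by
        rw [hB]; simp [Matrix.transpose_mul, Matrix.mul_assoc, hAh]
      rwa [Matrix.IsHermitian, Matrix.conjTranspose_eq_transpose_of_trivial]
    · intro x hx
      have hPx : P.mulVec x ≠ 0 := by
        intro h
        exact hx (mulVec_inj_of_rank P hP (by simpa using h))
      have h0 := hA.dotProduct_mulVec_pos hPx
      simpa [hBquad x] using h0
  have hBinv : IsUnit B.det := hBpd.det_pos.ne'.isUnit
  have hBBinv : Pᵀ * A * P * B⁻¹ = 1 := Matrix.mul_nonsing_inv _ hBinv
  -- Galerkin orthogonality: Pᵀ A e = 0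
  have horth : Pᵀ.mulVec (A.mulVec e) = 0 := by
    have hAums : Pᵀ.mulVec (A.mulVec u_ms) = Pᵀ.mulVec f := by
      rw [hms, Matrix.mulVec_mulVec, Matrix.mulVec_mulVec, Matrix.mulVec_mulVec,
        hBBinv, Matrix.one_mulVec]
    rw [he, Matrix.mulVec_sub, Matrix.mulVec_sub, hAu, hAums, sub_self]
  -- hence eᵀ A e = f ⬝ e
  have hkey : e ⬝ᵥ A.mulVec e = f ⬝ᵥ e := by
    have h1 : e ⬝ᵥ A.mulVec e = u ⬝ᵥ A.mulVec e - u_ms ⬝ᵥ A.mulVec e := by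
      rw [he, sub_dotProduct]
    have h2 : u_ms ⬝ᵥ A.mulVec e = 0 := by
      rw [hms, mulVec_dot, horth, dotProduct_zero]
    have h3 : u ⬝ᵥ A.mulVec e = f ⬝ᵥ e := by
      rw [Matrix.dotProduct_mulVec, ← Matrix.mulVec_transpose, hAh, hAu]
    rw [h1, h2, h3, sub_zero]
  -- D facts
  have hDh : Dᵀ = D := by
    have := hD.isHermitian
    rwa [Matrix.IsHermitian, Matrix.conjTranspose_eq_transpose_of_trivial] at this
  have hDinv : IsUnit D.det := hD.det_pos.ne'.isUnit
  have hDinvT : (D⁻¹)ᵀ = D⁻¹ := by rw [Matrix.transpose_nonsing_inv, hDh]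
  set S := CFC.sqrt D with hS
  have hSS : S * S = D := CFC.sqrt_mul_sqrt_self D hD.posSemidef.nonneg
  have hSh : Sᵀ = S := by
    have := (CFC.sqrt_nonneg D).posSemidef.isHermitian
    rwa [Matrix.IsHermitian, Matrix.conjTranspose_eq_transpose_of_trivial] at this
  have hfactor : ∀ x y : Fin n → ℝ, x ⬝ᵥ D.mulVec y = (S.mulVec x) ⬝ᵥ (S.mulVec y) := by
    intro x y
    rw [← hSS, ← Matrix.mulVec_mulVec, mulVec_dot, hSh]
  set g := D⁻¹.mulVec f with hg
  have hDg : D.mulVec g = f := by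
    rw [hg, Matrix.mulVec_mulVec, Matrix.mul_nonsing_inv _ hDinv, Matrix.one_mulVec]
  have h4 : f ⬝ᵥ e = g ⬝ᵥ D.mulVec e := by
    rw [hg, mulVec_dot, hDinvT, Matrix.mulVec_mulVec,
      Matrix.nonsing_inv_mul _ hDinv, Matrix.one_mulVec]
  have h5 : f ⬝ᵥ D⁻¹.mulVec f = g ⬝ᵥ D.mulVec g := by
    rw [hDg, hg, dotProduct_comm]
  rw [hkey, h4, h5, hfactor g e, hfactor g g, hfactor e e]
  exact dotProduct_cauchy_schwarz' _ _
end

section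
/- Let A = [[A_ff, A_fc],[A_cf, A_cc]] be symmetric with A_ff invertible, W = -A_ff⁻¹ A_fc, P = [[W],[I]], R = Pᵀ, S = A_cc - A_cf A_ff⁻¹ A_fc. Then the Galerkin projection Π = P (R A P)⁻¹ R A (assuming S invertible) has the block form Π = [[0, W],[0, I]]. -/
open Matrix

/-- For ideal interpolation `P = [[W],[I]]` with `W = -A_ff⁻¹ A_fc` and `R = Pᵀ`,
the Galerkin projection `Π = P (R A P)⁻¹ R A` has block form `[[0, W],[0, I]]`. -/
theorem ideal_interp_projection_block_form (nf nc : ℕ)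
    (Aff : Matrix (Fin nf) (Fin nf) ℝ) (Afc : Matrix (Fin nf) (Fin nc) ℝ)
    (Acf : Matrix (Fin nc) (Fin nf) ℝ) (Acc : Matrix (Fin nc) (Fin nc) ℝ)
    (A : Matrix (Fin nf ⊕ Fin nc) (Fin nf ⊕ Fin nc) ℝ)
    (hA : A = fromBlocks Aff Afc Acf Acc)
    (hsym : A.IsSymm)
    (hff : IsUnit Aff)
    (W : Matrix (Fin nf) (Fin nc) ℝ) (hW : W = -(Aff⁻¹ * Afc))
    (S : Matrix (Fin nc) (Fin nc) ℝ) (hS : S = Acc - Acf * Aff⁻¹ * Afc)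
    (hSu : IsUnit S)
    (P : Matrix (Fin nf ⊕ Fin nc) (Fin nc) ℝ) (hP : P = fromRows W 1)
    (R : Matrix (Fin nc) (Fin nf ⊕ Fin nc) ℝ) (hR : R = Pᵀ) :
    P * (R * A * P)⁻¹ * R * A = fromBlocks 0 W 0 1 := by
  have hsym' : (fromBlocks Aff Afc Acf Acc)ᵀ = fromBlocks Aff Afc Acf Acc := by
    rw [← hA]; exact hsym
  rw [fromBlocks_transpose] at hsym'
  have hAffT : Affᵀ = Aff := congrArg toBlocks₁₁ hsym'
  have hAfcT : Afcᵀ = Acf := congrArg toBlocks₂₁ hsym'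
  have hdet : IsUnit Aff.det := (Matrix.isUnit_iff_isUnit_det Aff).mp hff
  have hWT : Wᵀ = -(Acf * Aff⁻¹) := by
    rw [hW, transpose_neg, transpose_mul, transpose_nonsing_inv, hAffT, hAfcT]
  have hRc : R = fromCols Wᵀ 1 := by
    rw [hR, hP, transpose_fromRows, transpose_one]
  have hRA : R * A = fromCols 0 S := by
    rw [hRc, hA, fromCols_mul_fromBlocks, hWT, hS]
    simp [Matrix.mul_assoc, Matrix.nonsing_inv_mul _ hdet, neg_add_eq_sub]
  have hRAP : R * A * P = S := by
    rw [hRA, hP, fromCols_mul_fromRows, Matrix.zero_mul, Matrix.mul_one, zero_add]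
  have hSdet : IsUnit S.det := (Matrix.isUnit_iff_isUnit_det S).mp hSu
  calc P * (R * A * P)⁻¹ * R * A = P * S⁻¹ * (R * A) := by
        rw [hRAP, Matrix.mul_assoc]
    _ = fromBlocks 0 W 0 1 := by
        rw [hP, hRA, fromRows_mul, fromRows_mul_fromCols, Matrix.mul_zero,
          Matrix.mul_assoc W, Matrix.nonsing_inv_mul _ hSdet, Matrix.mul_one,
          Matrix.one_mul, Matrix.nonsing_inv_mul _ hSdet, Matrix.mul_zero]
end

section
/- Let A be symmetric positive definite with 2×2 block partition, W = -A_ff⁻¹ A_fc, P = [[W],[I]]. Then among all interpolation operators of the form Q = [[X],[I]] with arbitrary X, the ideal interpolation P minimizes the maximal energy of interpolation in the sense that for every coarse vector v_c, ‖P v_c‖_A ≤ ‖Q v_c‖_A; equivalently (P v_c)ᵀ A (P v_c) = v_cᵀ S v_c ≤ (Q v_c)ᵀ A (Q v_c) for all X and v_c, where S = A_cc - A_cf A_ff⁻¹ A_fc. -/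
open Matrix

/-- Energy optimality of ideal interpolation: among all interpolation operators
`Q = [[X],[I]]`, ideal interpolation `P = [[W],[I]]` with `W = -A_ff⁻¹ A_fc`
minimizes the interpolation energy, and `(P v_c)ᵀ A (P v_c) = v_cᵀ S v_c`. -/
theorem ideal_interp_energy_optimal (nf nc : ℕ)
    (Aff : Matrix (Fin nf) (Fin nf) ℝ) (Afc : Matrix (Fin nf) (Fin nc) ℝ)
    (Acf : Matrix (Fin nc) (Fin nf) ℝ) (Acc : Matrix (Fin nc) (Fin nc) ℝ)
    (A : Matrix (Fin nf ⊕ Fin nc) (Fin nf ⊕ Fin nc) ℝ)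
    (hA : A = fromBlocks Aff Afc Acf Acc)
    (hApd : A.PosDef)
    (W : Matrix (Fin nf) (Fin nc) ℝ) (hW : W = -(Aff⁻¹ * Afc))
    (S : Matrix (Fin nc) (Fin nc) ℝ) (hS : S = Acc - Acf * Aff⁻¹ * Afc)
    (P : Matrix (Fin nf ⊕ Fin nc) (Fin nc) ℝ) (hP : P = fromRows W 1) :
    ∀ (X : Matrix (Fin nf) (Fin nc) ℝ) (vc : Fin nc → ℝ),
      (P.mulVec vc) ⬝ᵥ A.mulVec (P.mulVec vc) = vc ⬝ᵥ S.mulVec vc ∧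
        (P.mulVec vc) ⬝ᵥ A.mulVec (P.mulVec vc) ≤
          ((fromRows X 1).mulVec vc) ⬝ᵥ A.mulVec ((fromRows X 1).mulVec vc) := by
  intro X vc
  -- symmetry of blocks
  have hsym : Aᵀ = A := by simpa [conjTranspose_eq_transpose_of_trivial] using hApd.1.eq
  rw [hA] at hsym
  rw [fromBlocks_transpose] at hsym
  have hAffs : Affᵀ = Aff := congrArg toBlocks₁₁ hsym
  have hAcf : Afcᵀ = Acf := congrArg toBlocks₂₁ hsym
  -- Aff posdef
  have hAffpd : Aff.PosDef := by
    refine Matrix.PosDef.of_dotProduct_mulVec_pos (Matrix.IsHermitian.ext fun i j => ?_) fun x hx => ?_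
    · simpa using (congrFun (congrFun hAffs j) i).symm
    · have hx' : (Sum.elim x 0 : Fin nf ⊕ Fin nc → ℝ) ≠ 0 := by
        intro h
        apply hx
        funext i
        exact congrFun h (Sum.inl i)
      have := hApd.dotProduct_mulVec_pos hx'
      simpa [hA, fromBlocks_mulVec, sumElim_dotProduct_sumElim] using this
  have hinv : Aff * Aff⁻¹ = 1 := mul_nonsing_inv _ hAffpd.det_pos.ne'.isUnit
  set w := W *ᵥ vc with hw
  set u := X *ᵥ vc with hu
  have hAw : Aff *ᵥ w = -(Afc *ᵥ vc) := by
    rw [hw, hW, neg_mulVec, mulVec_neg, mulVec_mulVec, ← Matrix.mul_assoc, hinv, Matrix.one_mul]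
  have key : ∀ y : Fin nf → ℝ,
      (Sum.elim y vc) ⬝ᵥ A *ᵥ (Sum.elim y vc) =
        y ⬝ᵥ Aff *ᵥ y + y ⬝ᵥ Afc *ᵥ vc + vc ⬝ᵥ Acf *ᵥ y + vc ⬝ᵥ Acc *ᵥ vc := by
    intro y
    simp [hA, fromBlocks_mulVec, sumElim_dotProduct_sumElim, dotProduct_add]
    ring
  have cross : ∀ y : Fin nf → ℝ, vc ⬝ᵥ Acf *ᵥ y = y ⬝ᵥ Afc *ᵥ vc := by
    intro y
    rw [← hAcf, dotProduct_mulVec, vecMul_transpose, dotProduct_comm]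
  have hsymAff : ∀ a b : Fin nf → ℝ, a ⬝ᵥ Aff *ᵥ b = b ⬝ᵥ Aff *ᵥ a := by
    intro a b
    conv_lhs => rw [dotProduct_mulVec, ← hAffs, vecMul_transpose]
    exact dotProduct_comm _ _
  have hPv : P *ᵥ vc = Sum.elim w vc := by
    rw [hP, fromRows_mulVec, Matrix.one_mulVec]
  have hQv : (fromRows X 1) *ᵥ vc = Sum.elim u vc := by
    rw [fromRows_mulVec, Matrix.one_mulVec]
  -- equality part
  have hafc : ∀ y : Fin nf → ℝ, y ⬝ᵥ Afc *ᵥ vc = -(y ⬝ᵥ Aff *ᵥ w) := by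
    intro y
    rw [hAw, dotProduct_neg, neg_neg]
  have heq : P *ᵥ vc ⬝ᵥ A *ᵥ P *ᵥ vc = vc ⬝ᵥ S *ᵥ vc := by
    rw [hPv, key w, cross w, hafc w, hS]
    have h1 : vc ⬝ᵥ (Acc - Acf * Aff⁻¹ * Afc) *ᵥ vc =
        vc ⬝ᵥ Acc *ᵥ vc - (Afc *ᵥ vc) ⬝ᵥ ((Aff⁻¹ * Afc) *ᵥ vc) := by
      have hT : ∀ z : Fin nf → ℝ, vc ⬝ᵥ Afcᵀ *ᵥ z = (Afc *ᵥ vc) ⬝ᵥ z := by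
        intro z
        conv_lhs => rw [dotProduct_mulVec, vecMul_transpose]
      rw [sub_mulVec, dotProduct_sub, ← hAcf, Matrix.mul_assoc, ← mulVec_mulVec, hT]
    have h2 : w ⬝ᵥ Aff *ᵥ w = (Afc *ᵥ vc) ⬝ᵥ ((Aff⁻¹ * Afc) *ᵥ vc) := by
      rw [hAw, hw, hW, neg_mulVec, neg_dotProduct, dotProduct_neg, neg_neg, dotProduct_comm]
    rw [h1, h2]
    ring
  refine ⟨heq, ?_⟩
  have hpsd : 0 ≤ (u - w) ⬝ᵥ Aff *ᵥ (u - w) := by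
    have h := hAffpd.posSemidef.dotProduct_mulVec_nonneg (u - w)
    rwa [star_trivial] at h
  rw [mulVec_sub, sub_dotProduct, dotProduct_sub, dotProduct_sub] at hpsd
  have hwu : w ⬝ᵥ Aff *ᵥ u = u ⬝ᵥ Aff *ᵥ w := hsymAff w u
  have heq2 := heq
  rw [hPv, key w, cross w, hafc w] at heq2
  rw [heq, hQv, key u, cross u, hafc u]
  linarith
end
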